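/- Let u = e_{n+1} and v = e_0 + √2 e_1 + (1+i) e_n in C^{n+2} (p, q ≥ 1). Then u and v are m-null with m(u,v) ≠ 0, and there is no pair (Z, z) ∈ C^{n*} × R such that s_{Z,z} either preserves both lines <u>, <v> or swaps the two lines <u>, <v>. -/

import Mathlib

open Complex Matrix ComplexConjugate

noncomputable section

/-- signature entries of the diagonal matrix `I = diag(1^p, (-1)^q)`. -/
def sgnCR (p k : ℕ) : ℂ := if k < p then 1 else -1

/-- safe indexing of a vector `Z : Fin n → ℂ` by a natural number. -/
def vx {n : ℕ} (Z : Fin n → ℂ) (k : ℕ) : ℂ := if h : k < n then Z ⟨k, h⟩ else 0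

/-- the pseudo-Hermitian form `m` of signature `(p+1, q+1)` on `ℂ^{n+2}`. -/
def mForm (n p : ℕ) (u v : Fin (n + 2) → ℂ) : ℂ :=
  u ⟨0, by omega⟩ * conj (v ⟨n + 1, by omega⟩) + u ⟨n + 1, by omega⟩ * conj (v ⟨0, by omega⟩)
    + ∑ k : Fin n, sgnCR p k.val * (u ⟨k.val + 1, by omega⟩ * conj (v ⟨k.val + 1, by omega⟩))

/-- the matrix `s_{Z,z}` with rows `(-1, -Z, iz + ½ Z I Z^*)`, `(0, E, -I Z^*)`, `(0, 0, -1)`. -/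
def sMat (n p : ℕ) (Z : Fin n → ℂ) (z : ℝ) : Matrix (Fin (n + 2)) (Fin (n + 2)) ℂ :=
  Matrix.of fun i j =>
    if i.val = 0 then
      if j.val = 0 then -1
      else if j.val = n + 1 then
        Complex.I * z + (1 / 2) * ∑ k : Fin n, Z k * sgnCR p k.val * conj (Z k)
      else -vx Z (j.val - 1)
    else if i.val = n + 1 then
      if j.val = n + 1 then -1 else 0
    else
      if j.val = 0 then 0
      else if j.val = n + 1 then -(sgnCR p (i.val - 1) * conj (vx Z (i.val - 1)))
      else if i = j then 1 else 0

lemma sgnCR_ne_zero (p k : ℕ) : sgnCR p k ≠ 0 := by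
  unfold sgnCR; split <;> simp

lemma sqrt2sq : (Real.sqrt 2 : ℂ) * conj (Real.sqrt 2 : ℂ) = 2 := by
  rw [Complex.conj_ofReal, ← Complex.ofReal_mul, Real.mul_self_sqrt (by norm_num)]
  norm_num

lemma onePlusI : (1 + Complex.I) * conj (1 + Complex.I) = 2 := by
  simp only [map_add, Complex.conj_I, _root_.map_one]
  linear_combination -Complex.I_sq

/-- for `u = e_{n+1}` and `v = e₀ + √2 e₁ + (1+i) e_n`, both are `m`-null
with `m(u,v) ≠ 0`, and there is no pair `(Z, z)` for which `s_{Z,z}` preserves both lines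
`⟨u⟩`, `⟨v⟩` or swaps the two lines. -/
theorem example_nonisotropic (n p : ℕ) (hn : 2 ≤ n) (hp : 1 ≤ p) (hq : p + 1 ≤ n) :
    let u : Fin (n + 2) → ℂ := fun j => if j.val = n + 1 then 1 else 0
    let v : Fin (n + 2) → ℂ := fun j =>
      if j.val = 0 then 1 else if j.val = 1 then (Real.sqrt 2 : ℂ)
      else if j.val = n then 1 + Complex.I else 0
    mForm n p u u = 0 ∧ mForm n p v v = 0 ∧ mForm n p u v ≠ 0 ∧
    ¬∃ (Z : Fin n → ℂ) (z : ℝ),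
      (((∃ c : ℂ, (sMat n p Z z).mulVec u = c • u) ∧
        (∃ d : ℂ, (sMat n p Z z).mulVec v = d • v)) ∨
       ((∃ c : ℂ, (sMat n p Z z).mulVec u = c • v) ∧
        (∃ d : ℂ, (sMat n p Z z).mulVec v = d • u))) := by
  intro u v
  have hu : ∀ j : Fin (n+2), u j = if j.val = n + 1 then 1 else 0 := fun _ => rfl
  have hv : ∀ j : Fin (n+2), v j = if j.val = 0 then 1 else if j.val = 1 then (Real.sqrt 2 : ℂ)
      else if j.val = n then 1 + Complex.I else 0 := fun _ => rfl
  refine ⟨?_, ?_, ?_, ?_⟩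
  · -- m(u,u) = 0
    simp only [mForm, hu]
    rw [Finset.sum_eq_zero]
    · norm_num
    · intro k _
      have : ¬ (k.val + 1 = n + 1) := by omega
      simp [this, show (k:ℕ) ≠ n by omega]
  · -- m(v,v) = 0
    simp only [mForm, hv]
    have hterm : ∀ k : Fin n,
        sgnCR p k.val * ((if k.val + 1 = 0 then (1:ℂ) else if k.val + 1 = 1 then (Real.sqrt 2 : ℂ)
            else if k.val + 1 = n then 1 + Complex.I else 0) *
          conj (if k.val + 1 = 0 then (1:ℂ) else if k.val + 1 = 1 then (Real.sqrt 2 : ℂ)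
            else if k.val + 1 = n then 1 + Complex.I else 0))
        = (if k = (⟨0, by omega⟩ : Fin n) then 2 else 0)
          + (if k = (⟨n-1, by omega⟩ : Fin n) then -2 else 0) := by
      intro k
      rcases eq_or_ne k.val 0 with h | h
      · have hk : k = (⟨0, by omega⟩ : Fin n) := Fin.ext h
        have h2 : ¬ (k = (⟨n-1, by omega⟩ : Fin n)) := by
          simp [Fin.ext_iff, h]; omega
        have e1 : sgnCR p k.val = 1 := by simp [sgnCR, h]; omega
        rw [if_pos hk, if_neg h2, e1, h]
        norm_num
        rw [← Complex.ofReal_mul, Real.mul_self_sqrt (by norm_num)]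
        norm_num
      · rcases eq_or_ne k.val (n-1) with h' | h'
        · have hk : k = (⟨n-1, by omega⟩ : Fin n) := Fin.ext h'
          have h2 : ¬ (k = (⟨0, by omega⟩ : Fin n)) := by
            simp [Fin.ext_iff, h']; omega
          have e2 : sgnCR p k.val = -1 := by simp [sgnCR, h']; omega
          have hkn : k.val + 1 = n := by omega
          rw [if_neg h2, if_pos hk, e2, hkn,
            if_neg (show ¬ (n = 0) by omega), if_neg (show ¬ (n = 1) by omega), if_pos rfl]
          linear_combination -onePlusI
        · have h2 : ¬ (k = (⟨0, by omega⟩ : Fin n)) := by simp [Fin.ext_iff]; omega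
          have h3 : ¬ (k = (⟨n-1, by omega⟩ : Fin n)) := by simp [Fin.ext_iff]; omega
          rw [if_neg h2, if_neg h3,
            if_neg (show ¬ (k.val + 1 = 0) by omega),
            if_neg (show ¬ (k.val + 1 = 1) by omega),
            if_neg (show ¬ (k.val + 1 = n) by omega)]
          simp
    rw [Finset.sum_congr rfl (fun k _ => hterm k), Finset.sum_add_distrib,
      Finset.sum_ite_eq' Finset.univ (⟨0, by omega⟩ : Fin n),
      Finset.sum_ite_eq' Finset.univ (⟨n-1, by omega⟩ : Fin n)]
    norm_num [show n ≠ 0 by omega]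
  · -- m(u,v) ≠ 0
    simp only [mForm, hu, hv]
    rw [Finset.sum_eq_zero]
    · norm_num
    · intro k _
      have : ¬ (k.val + 1 = n + 1) := by omega
      simp [this, show (k:ℕ) ≠ n by omega]
  · rintro ⟨Z, z, hcase⟩
    have hmu : ∀ i, (sMat n p Z z).mulVec u i = sMat n p Z z i ⟨n+1, by omega⟩ := by
      intro i
      rw [mulVec, dotProduct, Finset.sum_eq_single (⟨n+1, by omega⟩ : Fin (n+2))]
      · simp [hu]
      · intro j _ hj
        have : ¬ (j.val = n + 1) := fun h => hj (Fin.ext h)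
        simp [hu, this]
      · simp
    have hmv : ∀ i, (sMat n p Z z).mulVec v i =
        sMat n p Z z i ⟨0, by omega⟩ + sMat n p Z z i ⟨1, by omega⟩ * (Real.sqrt 2 : ℂ)
        + sMat n p Z z i ⟨n, by omega⟩ * (1 + Complex.I) := by
      intro i
      rw [mulVec, dotProduct]
      rw [← Finset.sum_subset
        (Finset.subset_univ ({⟨0, by omega⟩, ⟨1, by omega⟩, ⟨n, by omega⟩} :
          Finset (Fin (n+2))))]
      · rw [Finset.sum_insert (by simp [Fin.ext_iff]; omega),
          Finset.sum_insert (by simp [Fin.ext_iff]; omega), Finset.sum_singleton]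
        rw [show v ⟨0, by omega⟩ = 1 by simp [hv],
          show v ⟨1, by omega⟩ = (Real.sqrt 2 : ℂ) by simp [hv],
          show v ⟨n, by omega⟩ = 1 + Complex.I by
            simp only [hv]
            norm_num [show n ≠ 0 by omega, show n ≠ 1 by omega]]
        ring
      · intro j _ hj
        simp only [Finset.mem_insert, Finset.mem_singleton] at hj
        push_neg at hj
        have h0 : ¬ (j.val = 0) := fun h => hj.1 (Fin.ext h)
        have h1 : ¬ (j.val = 1) := fun h => hj.2.1 (Fin.ext h)
        have h2 : ¬ (j.val = n) := fun h => hj.2.2 (Fin.ext h)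
        simp [hv, h0, h1, h2]
    rcases hcase with ⟨⟨c, hc⟩, ⟨d, hd⟩⟩ | ⟨⟨c, hc⟩, ⟨d, hd⟩⟩
    · -- preserve case
      have hZ0 : vx Z 0 = 0 := by
        have h := congrFun hc ⟨1, by omega⟩
        rw [hmu] at h
        simp only [Pi.smul_apply, smul_eq_mul, hu] at h
        rw [if_neg (show ¬ ((⟨1, by omega⟩ : Fin (n+2)).val = n+1) by simp; omega)] at h
        rw [show sMat n p Z z ⟨1, by omega⟩ ⟨n+1, by omega⟩
            = -(sgnCR p 0 * conj (vx Z 0)) by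
          simp only [sMat, Matrix.of_apply]
          norm_num [show (1:ℕ) ≠ n+1 by omega, show n ≠ 0 by omega]] at h
        have h2 : sgnCR p 0 * conj (vx Z 0) = 0 :=
          neg_eq_zero.mp (h.trans (mul_zero c))
        rcases mul_eq_zero.mp h2 with h3 | h3
        · exact absurd h3 (sgnCR_ne_zero p 0)
        · simpa using congrArg conj h3
      have hZn : vx Z (n-1) = 0 := by
        have h := congrFun hc ⟨n, by omega⟩
        rw [hmu] at h
        simp only [Pi.smul_apply, smul_eq_mul, hu] at h
        rw [if_neg (show ¬ ((⟨n, by omega⟩ : Fin (n+2)).val = n+1) by simp)] at h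
        rw [show sMat n p Z z ⟨n, by omega⟩ ⟨n+1, by omega⟩
            = -(sgnCR p (n-1) * conj (vx Z (n-1))) by
          simp only [sMat, Matrix.of_apply]
          norm_num [show n ≠ 0 by omega, show n ≠ n+1 by omega]] at h
        have h2 : sgnCR p (n-1) * conj (vx Z (n-1)) = 0 :=
          neg_eq_zero.mp (h.trans (mul_zero c))
        rcases mul_eq_zero.mp h2 with h3 | h3
        · exact absurd h3 (sgnCR_ne_zero p (n-1))
        · simpa using congrArg conj h3
      have hs2 : (Real.sqrt 2 : ℂ) ≠ 0 := by
        simp only [ne_eq, Complex.ofReal_eq_zero]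
        positivity
      have hd1 : d = 1 := by
        have h := congrFun hd ⟨1, by omega⟩
        rw [hmv] at h
        simp only [Pi.smul_apply, smul_eq_mul, hv] at h
        rw [show sMat n p Z z ⟨1, by omega⟩ ⟨0, by omega⟩ = 0 by
            simp only [sMat, Matrix.of_apply]
            norm_num [show (1:ℕ) ≠ n+1 by omega],
          show sMat n p Z z ⟨1, by omega⟩ ⟨1, by omega⟩ = 1 by
            simp only [sMat, Matrix.of_apply]
            norm_num [show (1:ℕ) ≠ n+1 by omega, show n ≠ 0 by omega],
          show sMat n p Z z ⟨1, by omega⟩ ⟨n, by omega⟩ = 0 by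
            simp only [sMat, Matrix.of_apply]
            norm_num [show (1:ℕ) ≠ n+1 by omega, show n ≠ 0 by omega,
              show n ≠ n+1 by omega, Fin.ext_iff, show (1:ℕ) ≠ n by omega]] at h
        norm_num at h
        exact h
      have hd0 : d = -1 := by
        have h := congrFun hd ⟨0, by omega⟩
        rw [hmv] at h
        simp only [Pi.smul_apply, smul_eq_mul, hv] at h
        rw [show sMat n p Z z ⟨0, by omega⟩ ⟨0, by omega⟩ = -1 by
            simp only [sMat, Matrix.of_apply]; norm_num,
          show sMat n p Z z ⟨0, by omega⟩ ⟨1, by omega⟩ = -vx Z 0 by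
            simp only [sMat, Matrix.of_apply]
            norm_num [show (1:ℕ) ≠ n+1 by omega, show n ≠ 0 by omega],
          show sMat n p Z z ⟨0, by omega⟩ ⟨n, by omega⟩ = -vx Z (n-1) by
            simp only [sMat, Matrix.of_apply]
            norm_num [show n ≠ 0 by omega, show n ≠ n+1 by omega]] at h
        rw [hZ0, hZn] at h
        norm_num at h
        linear_combination -h
      rw [hd1] at hd0
      norm_num at hd0
    · -- swap case
      have h := congrFun hc ⟨n+1, by omega⟩
      rw [hmu] at h
      simp only [Pi.smul_apply, smul_eq_mul, hv] at h
      rw [show sMat n p Z z ⟨n+1, by omega⟩ ⟨n+1, by omega⟩ = -1 by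
          simp only [sMat, Matrix.of_apply]
          norm_num [show n+1 ≠ 0 by omega]] at h
      norm_num [show n+1 ≠ 1 by omega, show ¬ (n+1 = n) by omega, show n ≠ 0 by omega] at h
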